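/- Let P, Q ∈ ℤ with P·Q ≠ 0 and let R ∈ ℚ \ ℤ. Suppose that every prime p dividing the denominator of R (written in lowest terms) satisfies p ∤ gcd(P,Q). Then either L(P,Q,R) = {0} or L(P,Q,R) = ⟨m⟩ = mℕ for some m ≥ 2. -/

import Mathlib

/-- The Lucas sequence `U_n(P,Q)`: `U_0 = 0`, `U_1 = 1`,
`U_{n+2} = P·U_{n+1} − Q·U_n`. -/
def lucasU (P Q : ℤ) : ℕ → ℤ
  | 0 => 0
  | 1 => 1
  | n + 2 => P * lucasU P Q (n + 1) - Q * lucasU P Q n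

/-- The Lucas semigroup `L(P,Q,R) = {n ∈ ℕ : U_n(P,Q)·R ∈ ℤ}`. -/
def lucasSG (P Q : ℤ) (R : ℚ) : Set ℕ :=
  {n : ℕ | ∃ k : ℤ, (lucasU P Q n : ℚ) * R = (k : ℚ)}

lemma lucasU_zero (P Q : ℤ) : lucasU P Q 0 = 0 := rfl
lemma lucasU_one (P Q : ℤ) : lucasU P Q 1 = 1 := rfl
lemma lucasU_add_two (P Q : ℤ) (n : ℕ) :
    lucasU P Q (n + 2) = P * lucasU P Q (n + 1) - Q * lucasU P Q n := rfl

/-- Addition formula. -/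
lemma lucasU_add (P Q : ℤ) (m n : ℕ) :
    lucasU P Q (m + n + 1) =
      lucasU P Q (m + 1) * lucasU P Q (n + 1) - Q * lucasU P Q m * lucasU P Q n := by
  induction m using Nat.twoStepInduction generalizing n with
  | zero => simp [lucasU]
  | one =>
    have e : 1 + n + 1 = n + 2 := by ring
    rw [e, lucasU_add_two]
    simp [lucasU]
  | more m ih1 ih2 =>
    have e1 : m + 2 + n + 1 = m + n + 1 + 2 := by ring
    have e2 : m + n + 1 + 1 = m + 1 + n + 1 := by ring
    have h3 : lucasU P Q (m + 1 + 1) = P * lucasU P Q (m + 1) - Q * lucasU P Q m :=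
      lucasU_add_two P Q m
    have h4 : lucasU P Q (m + 2 + 1) = P * lucasU P Q (m + 2) - Q * lucasU P Q (m + 1) :=
      lucasU_add_two P Q (m + 1)
    have h5 : lucasU P Q (m + 2) = P * lucasU P Q (m + 1) - Q * lucasU P Q m :=
      lucasU_add_two P Q m
    rw [e1, lucasU_add_two, e2, ih2 n, ih1 n, h3, h4, h5]
    ring

/-- Membership in the Lucas semigroup is divisibility by the denominator. -/
lemma mem_lucasSG_iff (P Q : ℤ) (R : ℚ) (n : ℕ) :
    n ∈ lucasSG P Q R ↔ (R.den : ℤ) ∣ lucasU P Q n := by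
  set U := lucasU P Q n
  constructor
  · rintro ⟨k, hk⟩
    have h1 : (U * R.num : ℚ) = (k * R.den : ℚ) := by
      have := Rat.mul_den_eq_num R
      rw [← Rat.num_div_den R] at hk
      field_simp at hk
      linear_combination hk
    have h2 : U * R.num = k * R.den := by exact_mod_cast h1
    have hd : (R.den : ℤ) ∣ U * R.num := ⟨k, by linarith⟩
    have hcop : IsCoprime (R.den : ℤ) R.num := by
      rw [Int.isCoprime_iff_gcd_eq_one, Int.gcd]
      simpa [Nat.coprime_comm] using R.reduced
    exact hcop.dvd_of_dvd_mul_right hd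
  · rintro ⟨t, ht⟩
    refine ⟨t * R.num, ?_⟩
    have hden : (R.den : ℚ) * R = R.num := by
      rw [mul_comm]; exact_mod_cast Rat.mul_den_eq_num R
    show (U:ℚ) * R = _
    show (U:ℚ) * R = _
    rw [ht]
    push_cast [Int.cast_mul]
    rw [mul_comm ((R.den:ℚ)) (t:ℚ), mul_assoc, hden]

/-- Descent: a prime not dividing `Q` cannot divide two consecutive terms. -/
lemma lucasU_consec (P Q : ℤ) (p : ℕ) (hp : p.Prime) (hQ : ¬ (p:ℤ) ∣ Q) :
    ∀ n : ℕ, (p:ℤ) ∣ lucasU P Q n → (p:ℤ) ∣ lucasU P Q (n + 1) → False := by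
  intro n
  induction n with
  | zero =>
    intro _ h1
    rw [lucasU_one] at h1
    have h2 : (p:ℤ) ≤ 1 := Int.le_of_dvd one_pos h1
    have h3 : p ≤ 1 := by exact_mod_cast h2
    exact absurd h3 (Nat.not_le.mpr hp.one_lt)
  | succ n ih =>
    intro h1 h2
    rw [lucasU_add_two] at h2
    have : (p:ℤ) ∣ Q * lucasU P Q n := by
      have := dvd_sub (Dvd.dvd.mul_left h1 P) h2
      simpa using this
    rcases (Int.Prime.dvd_mul' hp this) with h | h
    · exact hQ h
    · exact ih h h1

/-- If a prime `p` divides `Q` but not `P`, then `p` never divides `U (n+1)`. -/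
lemma lucasU_not_dvd (P Q : ℤ) (p : ℕ) (hp : p.Prime) (hQ : (p:ℤ) ∣ Q) (hP : ¬ (p:ℤ) ∣ P) :
    ∀ n : ℕ, ¬ (p:ℤ) ∣ lucasU P Q (n + 1) := by
  intro n
  induction n with
  | zero =>
    rw [lucasU_one]
    intro h1
    have h2 : (p:ℤ) ≤ 1 := Int.le_of_dvd one_pos h1
    have h3 : p ≤ 1 := by exact_mod_cast h2
    exact absurd h3 (Nat.not_le.mpr hp.one_lt)
  | succ n ih =>
    intro h
    rw [lucasU_add_two] at h
    have : (p:ℤ) ∣ P * lucasU P Q (n + 1) := by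
      have := dvd_add h (hQ.mul_right (lucasU P Q n))
      simpa using this
    rcases (Int.Prime.dvd_mul' hp this) with h' | h'
    · exact hP h'
    · exact ih h'

/-- Existence of a positive index with `d ∣ U T`, when `gcd(d,Q)=1`. -/
lemma lucasU_exists_rank (P Q : ℤ) (d : ℕ) (hd : 2 ≤ d) (hcop : Nat.Coprime Q.natAbs d) :
    ∃ T : ℕ, 0 < T ∧ (d:ℤ) ∣ lucasU P Q T := by
  haveI : NeZero d := ⟨by omega⟩
  set f : ℕ → ZMod d × ZMod d := fun n => ((lucasU P Q n : ZMod d), (lucasU P Q (n+1) : ZMod d)) with hf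
  have hQ : IsUnit (Q : ZMod d) := by
    have h1 : IsUnit ((Q.natAbs : ℕ) : ZMod d) := (ZMod.isUnit_iff_coprime _ _).mpr hcop
    rcases Int.natAbs_eq Q with h | h
    · rw [h, Int.cast_natCast]; exact h1
    · rw [h, Int.cast_neg, Int.cast_natCast]; exact h1.neg
  have hstep : ∀ a b : ℕ, f (a + 1) = f (b + 1) → f a = f b := by
    intro a b h
    have h1 : (lucasU P Q (a+1) : ZMod d) = (lucasU P Q (b+1) : ZMod d) := congrArg Prod.fst h
    have h2 : (lucasU P Q (a+2) : ZMod d) = (lucasU P Q (b+2) : ZMod d) := congrArg Prod.snd h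
    rw [lucasU_add_two, lucasU_add_two] at h2
    push_cast at h2
    rw [h1] at h2
    have h3 : (Q : ZMod d) * (lucasU P Q a : ZMod d) = (Q : ZMod d) * (lucasU P Q b : ZMod d) := by
      linear_combination -h2
    have h4 : (lucasU P Q a : ZMod d) = (lucasU P Q b : ZMod d) := by
      exact (IsUnit.mul_right_injective hQ) h3
    simp only [hf, Prod.mk.injEq]
    exact ⟨h4, h1⟩
  have back : ∀ i t : ℕ, f i = f (i + t) → f 0 = f t := by
    intro i
    induction i with
    | zero => intro t h; simpa using h
    | succ i ih =>
      intro t h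
      exact ih t (hstep i (i + t) (by rwa [show i + 1 + t = i + t + 1 by ring] at h))
  obtain ⟨x, y, hxy, hfe⟩ := Finite.exists_ne_map_eq_of_infinite f
  rcases Nat.lt_or_ge x y with hlt | hge
  · refine ⟨y - x, by omega, ?_⟩
    have h0 : f 0 = f (y - x) := back x (y - x) (by rw [show x + (y - x) = y by omega]; exact hfe)
    have h1 : (lucasU P Q (y - x) : ZMod d) = 0 := by
      have := congrArg Prod.fst h0.symm
      simpa [hf, lucasU_zero] using this
    exact (ZMod.intCast_zmod_eq_zero_iff_dvd _ d).mp h1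
  · have hlt : y < x := by omega
    refine ⟨x - y, by omega, ?_⟩
    have h0 : f 0 = f (x - y) := back y (x - y) (by rw [show y + (x - y) = x by omega]; exact hfe.symm)
    have h1 : (lucasU P Q (x - y) : ZMod d) = 0 := by
      have := congrArg Prod.fst h0.symm
      simpa [hf, lucasU_zero] using this
    exact (ZMod.intCast_zmod_eq_zero_iff_dvd _ d).mp h1

/-- Translation by `m` (where `d ∣ U m`) preserves divisibility of `U` by `d`. -/
lemma lucasU_dvd_shift (P Q : ℤ) (d : ℕ) (hd : 2 ≤ d) (hcop : Nat.Coprime Q.natAbs d)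
    (m' : ℕ) (hdm : (d:ℤ) ∣ lucasU P Q (m' + 1)) (n : ℕ) :
    (d:ℤ) ∣ lucasU P Q (m' + 1 + n) ↔ (d:ℤ) ∣ lucasU P Q n := by
  have hdQ : IsCoprime (d:ℤ) Q := by
    rw [Int.isCoprime_iff_gcd_eq_one, Int.gcd]
    simpa [Nat.coprime_comm] using hcop
  have hdU : IsCoprime (d:ℤ) (lucasU P Q m') := by
    rw [Int.isCoprime_iff_gcd_eq_one]
    by_contra hne
    set g := Int.gcd (d:ℤ) (lucasU P Q m') with hg
    have hg0 : g ≠ 0 := by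
      intro h0
      rw [hg, Int.gcd_eq_zero_iff] at h0
      have hd0 : (d:ℤ) = 0 := h0.1
      have : d = 0 := by exact_mod_cast hd0
      omega
    set p := g.minFac with hpdef
    have hp : p.Prime := Nat.minFac_prime hne
    have hpg : (p:ℤ) ∣ g := Int.natCast_dvd_natCast.mpr (Nat.minFac_dvd g)
    have hpd : (p:ℤ) ∣ (d:ℤ) := hpg.trans (Int.gcd_dvd_left _ _)
    have hpU : (p:ℤ) ∣ lucasU P Q m' := hpg.trans (Int.gcd_dvd_right _ _)
    have hpU1 : (p:ℤ) ∣ lucasU P Q (m' + 1) := hpd.trans hdm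
    have hpQ : ¬ (p:ℤ) ∣ Q := by
      intro hq
      have h1 : p ∣ Q.natAbs := Int.natCast_dvd_natCast.mp (by rwa [Int.dvd_natAbs])
      have h2 : p ∣ d := Int.natCast_dvd_natCast.mp hpd
      have := Nat.dvd_gcd h1 h2
      rw [hcop] at this
      exact absurd (Nat.eq_one_of_dvd_one this) hp.ne_one
    exact lucasU_consec P Q p hp hpQ m' hpU hpU1
  have key : Q * lucasU P Q m' * lucasU P Q n =
      lucasU P Q (m' + 1) * lucasU P Q (n + 1) - lucasU P Q (m' + n + 1) := by
    rw [lucasU_add P Q m' n]; ring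
  have hco : IsCoprime (d:ℤ) (Q * lucasU P Q m') := hdQ.mul_right hdU
  have e : m' + 1 + n = m' + n + 1 := by ring
  rw [e]
  constructor
  · intro h
    have h2 : (d:ℤ) ∣ Q * lucasU P Q m' * lucasU P Q n := by
      rw [key]; exact dvd_sub (hdm.mul_right _) h
    exact hco.dvd_of_dvd_mul_left h2
  · intro h
    have h2 : (d:ℤ) ∣ Q * lucasU P Q m' * lucasU P Q n := Dvd.dvd.mul_left h _
    have := dvd_sub (hdm.mul_right (lucasU P Q (n+1))) h2
    rw [key] at this
    simpa using this

set_option linter.unusedVariables false in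
/-- If `PQ ≠ 0` and every prime dividing the denominator of `R ∈ ℚ \ ℤ` is
regular (does not divide `gcd(P,Q)`), then `L(P,Q,R)` is `{0}` or cyclic. -/
theorem lucasSG_of_regular_denominator (P Q : ℤ) (hPQ : P * Q ≠ 0) (R : ℚ)
    (hR : ¬ ∃ z : ℤ, (z : ℚ) = R)
    (hreg : ∀ p : ℕ, p.Prime → p ∣ R.den → ¬ p ∣ Int.gcd P Q) :
    lucasSG P Q R = {0} ∨
      ∃ m : ℕ, 2 ≤ m ∧
        lucasSG P Q R = (AddSubmonoid.closure ({m} : Set ℕ) : Set ℕ) := by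
  set d := R.den with hdden
  have hd2 : 2 ≤ d := by
    have hpos : 0 < R.den := R.pos
    rcases Nat.lt_or_ge R.den 2 with h | h
    · exfalso
      have hden1 : R.den = 1 := by omega
      exact hR ⟨R.num, by rw [← Rat.num_div_den R, hden1]; simp⟩
    · exact h
  have hd1 : ¬ (d:ℤ) ∣ 1 := by
    intro h
    have := Int.le_of_dvd one_pos h
    have : d ≤ 1 := by exact_mod_cast this
    omega
  by_cases hcop : Nat.Coprime Q.natAbs d
  · -- d coprime to Q : cyclic case
    right
    obtain ⟨T, hT0, hTd⟩ := lucasU_exists_rank P Q d hd2 hcop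
    have hex : ∃ n : ℕ, 0 < n ∧ (d:ℤ) ∣ lucasU P Q n := ⟨T, hT0, hTd⟩
    classical
    have hm0 : 0 < Nat.find hex := (Nat.find_spec hex).1
    have hmdf : (d:ℤ) ∣ lucasU P Q (Nat.find hex) := (Nat.find_spec hex).2
    have hminf : ∀ k, 0 < k → k < Nat.find hex → ¬ (d:ℤ) ∣ lucasU P Q k := by
      intro k hk0 hkm hkd
      exact Nat.find_min hex hkm ⟨hk0, hkd⟩
    have hm2f : 2 ≤ Nat.find hex := by
      by_contra h
      push_neg at h
      have h1 : Nat.find hex = 1 := by omega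
      rw [h1, lucasU_one] at hmdf
      exact hd1 hmdf
    obtain ⟨m', hm'⟩ : ∃ m', Nat.find hex = m' + 1 := ⟨Nat.find hex - 1, by omega⟩
    have hmd : (d:ℤ) ∣ lucasU P Q (m' + 1) := hm' ▸ hmdf
    have hmin : ∀ k, 0 < k → k < m' + 1 → ¬ (d:ℤ) ∣ lucasU P Q k := hm' ▸ hminf
    have hm2 : 2 ≤ m' + 1 := hm' ▸ hm2f
    have shift := lucasU_dvd_shift P Q d hd2 hcop m' hmd
    -- characterization : d ∣ U n ↔ m ∣ n
    have fwd : ∀ n : ℕ, (d:ℤ) ∣ lucasU P Q n → (m' + 1) ∣ n := by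
      intro n
      induction n using Nat.strong_induction_on with
      | _ n ih =>
        intro h
        rcases Nat.eq_zero_or_pos n with rfl | hn0
        · exact dvd_zero _
        rcases Nat.lt_or_ge n (m' + 1) with hlt | hge
        · exact absurd h (hmin n hn0 hlt)
        · have e : n = m' + 1 + (n - (m' + 1)) := by omega
          have h2 : (d:ℤ) ∣ lucasU P Q (n - (m' + 1)) := by
            rw [e] at h; exact (shift _).mp h
          have h3 := ih (n - (m' + 1)) (by omega) h2
          rw [e]
          exact Nat.dvd_add (dvd_refl _) h3
    have bwd : ∀ k : ℕ, (d:ℤ) ∣ lucasU P Q ((m' + 1) * k) := by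
      intro k
      induction k with
      | zero => simp [lucasU_zero]
      | succ k ih =>
        have e : (m' + 1) * (k + 1) = m' + 1 + (m' + 1) * k := by ring
        rw [e]
        exact (shift _).mpr ih
    refine ⟨m' + 1, hm2, ?_⟩
    ext n
    have hcl : n ∈ (AddSubmonoid.closure ({m' + 1} : Set ℕ) : Set ℕ) ↔ (m' + 1) ∣ n := by
      rw [SetLike.mem_coe, AddSubmonoid.mem_closure_singleton]
      constructor
      · rintro ⟨k, rfl⟩; exact ⟨k, by rw [smul_eq_mul]; ring⟩
      · rintro ⟨k, rfl⟩; exact ⟨k, by rw [smul_eq_mul]; ring⟩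
    rw [hcl, mem_lucasSG_iff]
    constructor
    · exact fwd n
    · rintro ⟨k, rfl⟩; exact bwd k
  · -- some prime divides both d and Q : trivial case
    left
    have hg : Nat.gcd Q.natAbs d ≠ 1 := hcop
    have hgd : Nat.gcd Q.natAbs d ∣ d := Nat.gcd_dvd_right _ _
    have hg0 : Nat.gcd Q.natAbs d ≠ 0 := by
      intro h
      have := Nat.eq_zero_of_gcd_eq_zero_right h
      omega
    set p := (Nat.gcd Q.natAbs d).minFac with hp'
    have hp : p.Prime := Nat.minFac_prime hg
    have hpd : p ∣ d := (Nat.minFac_dvd _).trans hgd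
    have hpQn : p ∣ Q.natAbs := (Nat.minFac_dvd _).trans (Nat.gcd_dvd_left _ _)
    have hpQ : (p:ℤ) ∣ Q := Int.dvd_natAbs.mp (Int.natCast_dvd_natCast.mpr hpQn)
    have hpP : ¬ (p:ℤ) ∣ P := by
      intro hP
      exact hreg p hp hpd (Int.natCast_dvd_natCast.mp (Int.dvd_coe_gcd hP hpQ))
    ext n
    simp only [Set.mem_singleton_iff]
    rw [show (n ∈ lucasSG P Q R) ↔ _ from mem_lucasSG_iff P Q R n]
    constructor
    · intro h
      rcases n with _ | k
      · rfl
      · exfalso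
        have : (p:ℤ) ∣ lucasU P Q (k + 1) :=
          (Int.natCast_dvd_natCast.mpr hpd).trans h
        exact lucasU_not_dvd P Q p hp hpQ hpP k this
    · rintro rfl
      simp [lucasU_zero]
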